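/- For the slot-sequential choice rule C̄ with slots 1, ..., k, if Y ⊆ Y' ⊆ X, then for every slot index j, the set of remaining contracts after slot j in the process on Y is a subset of the set of remaining contracts after slot j in the process on Y'. -/
import Mathlib

open Finset
variable {X : Type*} [DecidableEq X] [Fintype X]

/-- From an offer set `Y`, select the `π`-maximal element of `Y ∪ {∅}`
(`none` plays the role of the null contract; higher `π`-value = higher priority). -/
noncomputable def pick (π : Option X → ℕ) (Y : Finset X) : Option X :=
  (((insert (none : Option X) (Y.image some)).toList).argmax π).join

/-- Slot-sequential choice: each slot selects the priority-maximal remaining contract. -/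
noncomputable def chosen : List (Option X → ℕ) → Finset X → Finset X
  | [], _ => ∅
  | π :: L, Y =>
    match pick π Y with
    | none => chosen L Y
    | some x => insert x (chosen L (Y.erase x))

/-- Remaining contracts after all slots in the list have selected. -/
noncomputable def remain : List (Option X → ℕ) → Finset X → Finset X
  | [], Y => Y
  | π :: L, Y =>
    match pick π Y with
    | none => remain L Y
    | some x => remain L (Y.erase x)


lemma pick_le {π : Option X → ℕ} {Y : Finset X} {o : Option X}
    (ho : o ∈ insert (none : Option X) (Y.image some)) :
    π o ≤ π (pick π Y) := by
  have hmem : o ∈ (insert (none : Option X) (Y.image some)).toList :=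
    Finset.mem_toList.2 ho
  rcases ha : ((insert (none : Option X) (Y.image some)).toList).argmax π with _ | a
  · exfalso
    have := List.argmax_eq_none.1 ha
    simp [this] at hmem
  · have h1 := List.le_of_mem_argmax hmem ha
    simpa [pick, ha] using h1

lemma pick_mem {π : Option X → ℕ} {Y : Finset X} :
    pick π Y ∈ insert (none : Option X) (Y.image some) := by
  rcases ha : ((insert (none : Option X) (Y.image some)).toList).argmax π with _ | a
  · simp [pick, ha]
  · have := List.argmax_mem ha
    have : a ∈ insert (none : Option X) (Y.image some) := Finset.mem_toList.1 this
    simpa [pick, ha] using this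

lemma pick_some_mem {π : Option X → ℕ} {Y : Finset X} {x : X}
    (h : pick π Y = some x) : x ∈ Y := by
  have := @pick_mem X _ _ π Y
  rw [h] at this
  simp at this
  exact this

lemma step_subset (π : Option X → ℕ) (hπ : Function.Injective π)
    {Y Y' : Finset X} (h : Y ⊆ Y') :
    (match pick π Y with | none => Y | some x => Y.erase x) ⊆
    (match pick π Y' with | none => Y' | some x => Y'.erase x) := by
  intro z hz
  have hzY : z ∈ Y := by
    rcases hp : pick π Y with _ | x <;> simp [hp] at hz
    · exact hz
    · exact hz.2
  rcases hp' : pick π Y' with _ | x'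
  · simp [hp']; exact h hzY
  · simp [hp']
    refine ⟨?_, h hzY⟩
    rintro rfl
    -- z is the pick from Y'; derive contradiction with z surviving in Y
    have hmax' : ∀ o ∈ insert (none : Option X) (Y'.image some), π o ≤ π (some z) := by
      intro o ho
      have := pick_le (π := π) ho
      rwa [hp'] at this
    rcases hp : pick π Y with _ | y
    · -- pick π Y = none : π (some z) ≤ π none and π none ≤ π (some z)
      have h1 : π (some z) ≤ π (pick π Y) := by
        apply pick_le
        simp [hzY]
      rw [hp] at h1
      have h2 : π (none : Option X) ≤ π (some z) := hmax' _ (by simp)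
      have : (some z : Option X) = none := hπ (le_antisymm h1 h2)
      simp at this
    · simp [hp] at hz
      have h1 : π (some z) ≤ π (some y) := by
        have := pick_le (π := π) (Y := Y) (o := some z) (by simp [hzY])
        rwa [hp] at this
      have h2 : π (some y) ≤ π (some z) := by
        apply hmax'
        simp
        exact h (pick_some_mem hp)
      have : (some z : Option X) = some y := hπ (le_antisymm h1 h2)
      exact hz.1 (by injection this)

lemma remain_mono_aux (L : List (Option X → ℕ)) (hinj : ∀ π ∈ L, Function.Injective π)
    {Y Y' : Finset X} (h : Y ⊆ Y') : remain L Y ⊆ remain L Y' := by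
  induction L generalizing Y Y' with
  | nil => simpa [remain] using h
  | cons π L ih =>
    have hstep := step_subset π (hinj π (by simp)) h
    have hL : ∀ π' ∈ L, Function.Injective π' := fun π' hm => hinj π' (by simp [hm])
    rcases hp : pick π Y with _ | x <;> rcases hp' : pick π Y' with _ | x' <;>
      simp [remain, hp, hp'] <;> simp [hp, hp'] at hstep <;> exact ih hL hstep

/-- Monotonicity of remaining sets: larger offer sets leave larger remaining
sets after every slot. -/
theorem remain_mono (L : List (Option X → ℕ)) (hinj : ∀ π ∈ L, Function.Injective π)
    (Y Y' : Finset X) (h : Y ⊆ Y') (j : ℕ) :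
    remain (L.take j) Y ⊆ remain (L.take j) Y' := by
  exact remain_mono_aux (L.take j) (fun π hm => hinj π (List.mem_of_mem_take hm)) h
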